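/- For every real number r > 0, every integer n ≥ 1, and every real t ≥ 0, one has t^((n+1)/(n+2)) ≤ e^(r+2) · t + (n+1)^(-(r+2)). -/
import Mathlib


/-- Elementary inequality used in Yano-type extrapolation:
for `r > 0`, `n ≥ 1` and `t ≥ 0`,
`t^((n+1)/(n+2)) ≤ e^(r+2) * t + (n+1)^(-(r+2))`. -/
theorem elementary_yano_inequality (r : ℝ) (hr : 0 < r) (n : ℕ) (hn : 1 ≤ n)
    (t : ℝ) (ht : 0 ≤ t) :
    t ^ (((n : ℝ) + 1) / ((n : ℝ) + 2)) ≤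
      Real.exp (r + 2) * t + ((n : ℝ) + 1) ^ (-(r + 2)) := by
  have hn0 : (0:ℝ) ≤ (n:ℝ) := n.cast_nonneg
  set N : ℝ := (n : ℝ) + 1 with hNdef
  have hN1 : (1:ℝ) ≤ N := by simp [hNdef, hn0]
  have hN0 : (0:ℝ) < N := lt_of_lt_of_le one_pos hN1
  have hn2 : (0:ℝ) < (n:ℝ) + 2 := by linarith
  set α : ℝ := ((n : ℝ) + 1) / ((n : ℝ) + 2) with hαdef
  have hα0 : 0 < α := by positivity
  have hα1 : α < 1 := by
    rw [hαdef, div_lt_one hn2]; linarith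
  rcases eq_or_lt_of_le ht with h0 | htpos
  · rw [← h0, Real.zero_rpow hα0.ne']
    positivity
  by_cases hcase : t ^ α ≤ N ^ (-(r + 2))
  · have : 0 ≤ Real.exp (r + 2) * t := by positivity
    linarith
  push_neg at hcase
  -- t is above the threshold θ = N ^ (-(r+2)/α)
  set θ : ℝ := N ^ (-(r + 2) / α) with hθdef
  have hθpos : 0 < θ := Real.rpow_pos_of_pos hN0 _
  have hθt : θ ≤ t := by
    have h1 : (N ^ (-(r + 2))) ^ (1/α) ≤ (t ^ α) ^ (1/α) :=
      Real.rpow_le_rpow (by positivity) hcase.le (by positivity)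
    rw [← Real.rpow_mul hN0.le, ← Real.rpow_mul ht] at h1
    · rw [mul_one_div, mul_one_div, div_self hα0.ne', Real.rpow_one] at h1
      rw [hθdef]; exact h1
  -- main computation: t^α = t * t^(α-1)
  have key : t ^ α = t * t ^ (α - 1) := by
    rw [← Real.rpow_one_add' (le_of_lt htpos) (by ring_nf; positivity)]
    · ring_nf
  have hexp : t ^ (α - 1) ≤ Real.exp (r + 2) := by
    have h2 : t ^ (α - 1) ≤ θ ^ (α - 1) :=
      Real.rpow_le_rpow_of_nonpos hθpos hθt (by linarith)
    refine h2.trans ?_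
    rw [hθdef, ← Real.rpow_mul hN0.le, Real.rpow_def_of_pos hN0]
    rw [Real.exp_le_exp]
    have hlog : Real.log N ≤ N := by
      have := Real.log_le_sub_one_of_pos hN0
      linarith
    have hlogpos : 0 ≤ Real.log N := Real.log_nonneg hN1
    have hcoef : -(r + 2) / α * (α - 1) = (r + 2) * ((1 - α)/α) := by
      field_simp; ring
    rw [hcoef]
    have hfrac : (1 - α)/α = 1 / N := by
      rw [hαdef, hNdef]
      field_simp
      ring
    rw [hfrac, show Real.log N * ((r + 2) * (1 / N)) = (r + 2) * (1 / N) * Real.log N from by ring]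
    calc (r + 2) * (1 / N) * Real.log N ≤ (r + 2) * (1 / N) * N := by
          apply mul_le_mul_of_nonneg_left (hlog) (by positivity)
      _ = r + 2 := by field_simp
  calc t ^ α = t * t ^ (α - 1) := key
    _ ≤ t * Real.exp (r + 2) := mul_le_mul_of_nonneg_left hexp ht
    _ ≤ Real.exp (r + 2) * t + N ^ (-(r + 2)) := by
        have : (0:ℝ) ≤ N ^ (-(r + 2)) := by positivity
        linarith [mul_comm t (Real.exp (r + 2))]
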